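/- arXiv:1705.09549 — 3 statements merged into one kernel-verified Lean document; each statement's English description precedes it below -/
import Mathlib

section
/- Let y₁, y₂ ∈ ℝ and let E(θ) = ½((y₁ − θ²)² + (y₂ − θ)²). Suppose E has exactly two local minimum points θ₁ and θ₂ with θ₁ ≠ θ₂, and let α₁ and α₂ be their respective RE constants (values in [0,∞]). If α₁ > α₂ then θ₁ is a global minimum point of E, i.e. E(θ₁) ≤ E(θ) for all θ ∈ ℝ; and if α₂ > α₁ then θ₂ is a global minimum point of E. -/
open scoped ENNReal

/-- The quartic least-squares objective `E(θ) = ½((y₁ − θ²)² + (y₂ − θ)²)`. -/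
noncomputable def quarticE (y₁ y₂ : ℝ) (θ : ℝ) : ℝ :=
  (1 / 2) * ((y₁ - θ ^ 2) ^ 2 + (y₂ - θ) ^ 2)

/-- The `α`-expanded quartic objective at the point `θs`:
`E_α(θ) = ½((ŷ₁ − θ²)² + (ŷ₂ − θ)²)` with `ŷ₁ = y₁ + α(y₁ − θs²)`, `ŷ₂ = y₂ + α(y₂ − θs)`. -/
noncomputable def quarticEexp (y₁ y₂ θs α : ℝ) (θ : ℝ) : ℝ :=
  (1 / 2) * (((y₁ + α * (y₁ - θs ^ 2)) - θ ^ 2) ^ 2 + ((y₂ + α * (y₂ - θs)) - θ) ^ 2)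

/-- The RE constant of `θs`: `sup {α ≥ 0 : θs is a local minimum point of E_α}`,
as an element of `[0, ∞]`. -/
noncomputable def reConst (y₁ y₂ θs : ℝ) : ℝ≥0∞ :=
  sSup (ENNReal.ofReal '' {α : ℝ | 0 ≤ α ∧ IsLocalMin (quarticEexp y₁ y₂ θs α) θs})

lemma firstOrder {y₁ y₂ θs : ℝ} (h : IsLocalMin (quarticE y₁ y₂) θs) :
    2 * θs * (y₁ - θs ^ 2) + (y₂ - θs) = 0 := by
  have hsq : HasDerivAt (fun θ : ℝ => θ ^ 2) (2 * θs) θs := by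
    simpa using (hasDerivAt_id θs).fun_pow 2
  have ha : HasDerivAt (fun θ : ℝ => y₁ - θ ^ 2) (-(2 * θs)) θs := hsq.const_sub y₁
  have ha2 : HasDerivAt (fun θ : ℝ => (y₁ - θ ^ 2) ^ 2)
      (2 * (y₁ - θs ^ 2) * (-(2 * θs))) θs := by
    simpa using ha.fun_pow 2
  have hb : HasDerivAt (fun θ : ℝ => y₂ - θ) (-1 : ℝ) θs := by
    simpa using (hasDerivAt_id θs).const_sub y₂
  have hb2 : HasDerivAt (fun θ : ℝ => (y₂ - θ) ^ 2) (2 * (y₂ - θs) * (-1)) θs := by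
    simpa using hb.fun_pow 2
  have hE : HasDerivAt (quarticE y₁ y₂)
      ((1/2) * (2 * (y₁ - θs ^ 2) * (-(2 * θs)) + 2 * (y₂ - θs) * (-1))) θs := by
    have := (ha2.add hb2).const_mul (1/2 : ℝ)
    unfold quarticE
    exact this
  have h0 := h.deriv_eq_zero
  rw [hE.deriv] at h0
  linarith

lemma expandId {y₁ y₂ θs : ℝ} (hg : 2 * θs * (y₁ - θs ^ 2) + (y₂ - θs) = 0) (α θ : ℝ) :
    quarticEexp y₁ y₂ θs α θ =
      quarticEexp y₁ y₂ θs α θs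
        + (1/2) * (θ - θs)^2 * ((θ + θs)^2 + 1 - 2*(1+α)*(y₁ - θs^2)) := by
  unfold quarticEexp
  linear_combination (-(1+α) * (θ - θs)) * hg


lemma isLocalMin_of {y₁ y₂ θs α : ℝ}
    (hg : 2 * θs * (y₁ - θs ^ 2) + (y₂ - θs) = 0)
    (h : 2*(1+α)*(y₁ - θs^2) < 4*θs^2 + 1 ∨
        (2*(1+α)*(y₁ - θs^2) = 4*θs^2 + 1 ∧ θs = 0)) :
    IsLocalMin (quarticEexp y₁ y₂ θs α) θs := by
  rcases h with h | ⟨h, hθ⟩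
  · set q : ℝ := 4*θs^2 + 1 - 2*(1+α)*(y₁ - θs^2) with hqdef
    have hq0 : 0 < q := by rw [hqdef]; linarith
    have hden : (0:ℝ) < 4*|θs| + 1 := by positivity
    set δ : ℝ := q / (4*|θs| + 1) with hδdef
    have hδ0 : 0 < δ := by positivity
    refine Metric.eventually_nhds_iff.mpr ⟨δ, hδ0, fun θ hθ' => ?_⟩
    rw [expandId hg α θ]
    have ht : |θ - θs| < δ := by simpa [Real.dist_eq] using hθ'
    have h1 : θs * (θ - θs) ≥ -(|θs| * |θ - θs|) := by
      have := neg_abs_le (θs * (θ - θs)); rw [abs_mul] at this; linarith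
    have h2 : |θs| * |θ - θs| ≤ |θs| * δ := by
      exact mul_le_mul_of_nonneg_left ht.le (abs_nonneg _)
    have h3 : δ * (4*|θs| + 1) = q := by rw [hδdef]; field_simp
    have hQ : 0 ≤ (θ + θs)^2 + 1 - 2*(1+α)*(y₁ - θs^2) := by
      have hexp : (θ + θs)^2 + 1 - 2*(1+α)*(y₁ - θs^2)
          = q + 4*(θs*(θ - θs)) + (θ - θs)^2 := by rw [hqdef]; ring
      rw [hexp]
      nlinarith [sq_nonneg (θ - θs), abs_nonneg θs, hδ0]
    nlinarith [sq_nonneg (θ - θs)]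
  · subst hθ
    refine Filter.Eventually.of_forall (fun θ => ?_)
    rw [expandId hg α θ]
    simp only [pow_two] at h ⊢
    nlinarith [sq_nonneg θ, sq_nonneg (θ*θ)]

lemma necCond {y₁ y₂ θs α : ℝ}
    (hg : 2 * θs * (y₁ - θs ^ 2) + (y₂ - θs) = 0)
    (h : IsLocalMin (quarticEexp y₁ y₂ θs α) θs) :
    2*(1+α)*(y₁ - θs^2) < 4*θs^2 + 1 ∨
      (2*(1+α)*(y₁ - θs^2) = 4*θs^2 + 1 ∧ θs = 0) := by
  by_contra hcon
  push_neg at hcon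
  obtain ⟨hge, himp⟩ := hcon
  set q : ℝ := 4*θs^2 + 1 - 2*(1+α)*(y₁ - θs^2) with hqdef
  have hqle : q ≤ 0 := by rw [hqdef]; linarith
  obtain ⟨ε, hε, hball⟩ := Metric.eventually_nhds_iff.mp h
  set σ : ℝ := if 0 ≤ θs then -1 else 1 with hσdef
  have hσθ : σ * θs = -|θs| := by
    by_cases hs : 0 ≤ θs
    · simp [hσdef, hs, abs_of_nonneg hs]
    · simp [hσdef, hs, abs_of_neg (lt_of_not_ge hs)]
  have hσsq : σ^2 = 1 := by
    by_cases hs : 0 ≤ θs <;> simp [hσdef, hs]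
  have hσabs : |σ| = 1 := by
    by_cases hs : 0 ≤ θs <;> simp [hσdef, hs]
  rcases lt_or_eq_of_le hqle with hqlt | hqeq
  · -- q < 0
    set δ : ℝ := min (ε/2) (Real.sqrt (-q) / 2) with hδdef
    have hsq : 0 < Real.sqrt (-q) := Real.sqrt_pos.mpr (by linarith)
    have hδ0 : 0 < δ := lt_min (by linarith) (by linarith)
    have hδε : δ < ε := lt_of_le_of_lt (min_le_left _ _) (by linarith)
    have hδq : δ^2 ≤ (-q)/4 := by
      have h1 : δ ≤ Real.sqrt (-q) / 2 := min_le_right _ _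
      have h2 : (Real.sqrt (-q) / 2)^2 = (-q)/4 := by
        rw [div_pow, Real.sq_sqrt (by linarith : (0:ℝ) ≤ -q)]; ring
      nlinarith
    have hdist : dist (θs + σ*δ) θs < ε := by
      rw [Real.dist_eq]
      simp only [add_sub_cancel_left, abs_mul, hσabs, one_mul]
      rw [abs_of_pos hδ0]; exact hδε
    have hb := hball hdist
    rw [expandId hg α (θs + σ*δ)] at hb
    have hkey : ((θs + σ*δ) + θs)^2 + 1 - 2*(1+α)*(y₁ - θs^2)
        = q + 4*(σ*θs)*δ + δ^2 := by
      rw [hqdef]; linear_combination δ^2 * hσsq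
    have hneg : ((θs + σ*δ) + θs)^2 + 1 - 2*(1+α)*(y₁ - θs^2) < 0 := by
      rw [hkey, hσθ]
      nlinarith [abs_nonneg θs, hδ0]
    have hsqpos : 0 < ((θs + σ*δ) - θs)^2 := by
      have : θs + σ*δ - θs = σ*δ := by ring
      rw [this]
      have : σ*δ ≠ 0 := by
        intro hc
        rcases mul_eq_zero.mp hc with h'|h'
        · rw [hσdef] at h'; by_cases hs : 0 ≤ θs <;> simp [hs] at h'
        · exact hδ0.ne' h'
      positivity
    have hX : 0 ≤ (1/2) * ((θs + σ*δ) - θs)^2 *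
        (((θs + σ*δ) + θs)^2 + 1 - 2*(1+α)*(y₁ - θs^2)) := (le_add_iff_nonneg_right _).mp hb
    clear hb
    linarith [mul_pos hsqpos (neg_pos.mpr hneg)]
  · -- q = 0, so θs ≠ 0
    have hθs : θs ≠ 0 := himp (by rw [hqdef] at hqeq; linarith)
    have habs : 0 < |θs| := abs_pos.mpr hθs
    set δ : ℝ := min (ε/2) (2*|θs|) with hδdef
    have hδ0 : 0 < δ := lt_min (by linarith) (by linarith)
    have hδε : δ < ε := lt_of_le_of_lt (min_le_left _ _) (by linarith)
    have hδθ : δ ≤ 2*|θs| := min_le_right _ _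
    have hdist : dist (θs + σ*δ) θs < ε := by
      rw [Real.dist_eq]
      simp only [add_sub_cancel_left, abs_mul, hσabs, one_mul]
      rw [abs_of_pos hδ0]; exact hδε
    have hb := hball hdist
    rw [expandId hg α (θs + σ*δ)] at hb
    have hkey : ((θs + σ*δ) + θs)^2 + 1 - 2*(1+α)*(y₁ - θs^2)
        = q + 4*(σ*θs)*δ + δ^2 := by
      rw [hqdef]; linear_combination δ^2 * hσsq
    have hneg : ((θs + σ*δ) + θs)^2 + 1 - 2*(1+α)*(y₁ - θs^2) < 0 := by
      rw [hkey, hσθ, ← hqeq]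
      nlinarith
    have hsqpos : 0 < ((θs + σ*δ) - θs)^2 := by
      have h1 : θs + σ*δ - θs = σ*δ := by ring
      rw [h1]
      have : σ*δ ≠ 0 := by
        intro hc
        rcases mul_eq_zero.mp hc with h'|h'
        · rw [hσdef] at h'; by_cases hs : 0 ≤ θs <;> simp [hs] at h'
        · exact hδ0.ne' h'
      positivity
    have hX : 0 ≤ (1/2) * ((θs + σ*δ) - θs)^2 *
        (((θs + σ*δ) + θs)^2 + 1 - 2*(1+α)*(y₁ - θs^2)) := (le_add_iff_nonneg_right _).mp hb
    clear hb
    linarith [mul_pos hsqpos (neg_pos.mpr hneg)]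

lemma exp_zero (y₁ y₂ θs : ℝ) : quarticEexp y₁ y₂ θs 0 = quarticE y₁ y₂ := by
  funext θ; simp [quarticEexp, quarticE]

lemma reConst_top {y₁ y₂ θs : ℝ} (hmin : IsLocalMin (quarticE y₁ y₂) θs)
    (hr : y₁ - θs ^ 2 ≤ 0) : reConst y₁ y₂ θs = ⊤ := by
  have hg := firstOrder hmin
  rw [reConst, sSup_eq_top]
  intro b hb
  have hmem : (b.toReal + 1) ∈ {α : ℝ | 0 ≤ α ∧ IsLocalMin (quarticEexp y₁ y₂ θs (b.toReal+1)) θs} := by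
    refine ⟨by positivity, isLocalMin_of hg (Or.inl ?_)⟩
    have h1 : (0:ℝ) ≤ 1 + (b.toReal + 1) := by positivity
    nlinarith [sq_nonneg θs, mul_nonpos_of_nonneg_of_nonpos h1 hr]
  refine ⟨ENNReal.ofReal (b.toReal + 1), ⟨b.toReal + 1, hmem, rfl⟩, ?_⟩
  calc b = ENNReal.ofReal b.toReal := (ENNReal.ofReal_toReal hb.ne).symm
    _ < ENNReal.ofReal (b.toReal + 1) := by
        rw [ENNReal.ofReal_lt_ofReal_iff (by positivity)]
        linarith

lemma reConst_eq {y₁ y₂ θs : ℝ} (hmin : IsLocalMin (quarticE y₁ y₂) θs)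
    (hr : 0 < y₁ - θs ^ 2) :
    reConst y₁ y₂ θs
      = ENNReal.ofReal ((4*θs^2 + 1 - 2*(y₁ - θs^2)) / (2*(y₁ - θs^2))) := by
  have hg := firstOrder hmin
  have hr2 : (0:ℝ) < 2*(y₁ - θs^2) := by linarith
  set A : ℝ := (4*θs^2 + 1 - 2*(y₁ - θs^2)) / (2*(y₁ - θs^2)) with hA
  have hmin0 : IsLocalMin (quarticEexp y₁ y₂ θs 0) θs := by
    rw [exp_zero]; exact hmin
  have hbase := necCond hg hmin0
  have hcle : 2*(y₁ - θs^2) ≤ 4*θs^2 + 1 := by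
    rcases hbase with h | ⟨h, _⟩ <;> nlinarith
  have hA0 : 0 ≤ A := div_nonneg (by linarith) (by linarith)
  have hub : ∀ α : ℝ, 0 ≤ α → IsLocalMin (quarticEexp y₁ y₂ θs α) θs → α ≤ A := by
    intro α hα hloc
    rw [hA, le_div_iff₀ hr2]
    rcases necCond hg hloc with h | ⟨h, _⟩ <;> nlinarith
  have hlb : ∀ α : ℝ, 0 ≤ α → α < A → IsLocalMin (quarticEexp y₁ y₂ θs α) θs := by
    intro α hα hαA
    refine isLocalMin_of hg (Or.inl ?_)
    rw [hA, lt_div_iff₀ hr2] at hαA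
    nlinarith
  rw [reConst]
  apply le_antisymm
  · refine sSup_le ?_
    rintro x ⟨α, ⟨hα0, hαloc⟩, rfl⟩
    exact ENNReal.ofReal_le_ofReal (hub α hα0 hαloc)
  · by_contra hlt
    push_neg at hlt
    set b := sSup (ENNReal.ofReal '' {α : ℝ | 0 ≤ α ∧ IsLocalMin (quarticEexp y₁ y₂ θs α) θs}) with hb
    have hbne : b ≠ ⊤ := (hlt.trans_le le_top).ne
    have hb' : b.toReal < A := by
      rw [← ENNReal.lt_ofReal_iff_toReal_lt hbne]; exact hlt
    set α : ℝ := (b.toReal + A) / 2 with hαdef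
    have ht0 : 0 ≤ b.toReal := ENNReal.toReal_nonneg
    have hα0 : 0 ≤ α := by rw [hαdef]; linarith
    have hαA : α < A := by rw [hαdef]; linarith
    have hmem : ENNReal.ofReal α ∈
        ENNReal.ofReal '' {α : ℝ | 0 ≤ α ∧ IsLocalMin (quarticEexp y₁ y₂ θs α) θs} :=
      ⟨α, ⟨hα0, hlb α hα0 hαA⟩, rfl⟩
    have h1 : ENNReal.ofReal α ≤ b := le_sSup hmem
    have h2 : b < ENNReal.ofReal α := by
      rw [ENNReal.lt_ofReal_iff_toReal_lt hbne, hαdef]; linarith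
    exact absurd h1 h2.not_ge

/-- `E` identity at a critical point. -/
lemma expandE {y₁ y₂ θs : ℝ} (hg : 2 * θs * (y₁ - θs ^ 2) + (y₂ - θs) = 0) (θ : ℝ) :
    quarticE y₁ y₂ θ =
      quarticE y₁ y₂ θs
        + (1/2) * (θ - θs)^2 * ((θ + θs)^2 + 1 - 2*(y₁ - θs^2)) := by
  have := expandId hg 0 θ
  rw [exp_zero] at this
  rw [this]; ring

lemma quarticE_nonneg (y₁ y₂ θ : ℝ) : 0 ≤ quarticE y₁ y₂ θ := by
  unfold quarticE; positivity

lemma globalMin {y₁ y₂ θ₁ θ₂ : ℝ}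
    (honly : ∀ θ : ℝ, IsLocalMin (quarticE y₁ y₂) θ → θ = θ₁ ∨ θ = θ₂)
    (hle : quarticE y₁ y₂ θ₁ ≤ quarticE y₁ y₂ θ₂) :
    ∀ θ : ℝ, quarticE y₁ y₂ θ₁ ≤ quarticE y₁ y₂ θ := by
  set E := quarticE y₁ y₂ with hE
  have hcont : Continuous E := by
    rw [hE]; unfold quarticE; fun_prop
  set M : ℝ := Real.sqrt (2 * E θ₁) with hM
  have hM0 : 0 ≤ M := Real.sqrt_nonneg _
  have hMsq : M^2 = 2 * E θ₁ := Real.sq_sqrt (by linarith [quarticE_nonneg y₁ y₂ θ₁])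
  set R : ℝ := |θ₁| + |y₂| + M + 1 with hR
  have hθ₁mem : θ₁ ∈ Set.Icc (-R) R := by
    constructor <;> [nlinarith [abs_nonneg θ₁, abs_nonneg y₂, neg_abs_le θ₁];
      nlinarith [abs_nonneg θ₁, abs_nonneg y₂, le_abs_self θ₁]]
  obtain ⟨θ₀, hθ₀mem, hθ₀min⟩ := (isCompact_Icc (a := -R) (b := R)).exists_isMinOn
    ⟨θ₁, hθ₁mem⟩ hcont.continuousOn
  have hθ₀min' : ∀ θ ∈ Set.Icc (-R) R, E θ₀ ≤ E θ := fun θ hθ => hθ₀min hθ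
  have h0le1 : E θ₀ ≤ E θ₁ := hθ₀min' θ₁ hθ₁mem
  have hout : ∀ θ : ℝ, θ ∉ Set.Icc (-R) R → E θ₁ < E θ := by
    intro θ hθ
    have hRθ : R < |θ| := by
      rcases not_and_or.mp ((Set.mem_Icc).not.mp hθ) with h | h
      · push_neg at h
        calc R < -θ := by linarith
          _ ≤ |θ| := by rw [abs_eq_max_neg]; exact le_max_right _ _
      · push_neg at h
        exact h.trans_le (le_abs_self θ)
    have h2 : M + 1 ≤ |y₂ - θ| := by
      have := abs_sub_abs_le_abs_sub θ y₂
      have h3 : |θ - y₂| = |y₂ - θ| := abs_sub_comm _ _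
      nlinarith [abs_nonneg θ₁]
    have h4 : (M+1)^2 ≤ (y₂ - θ)^2 := by
      have := sq_abs (y₂ - θ)
      nlinarith
    have h5 : E θ = (1/2) * ((y₁ - θ^2)^2 + (y₂ - θ)^2) := rfl
    nlinarith [sq_nonneg (y₁ - θ^2)]
  have hglob : ∀ θ : ℝ, E θ₀ ≤ E θ := by
    intro θ
    by_cases hθ : θ ∈ Set.Icc (-R) R
    · exact hθ₀min' θ hθ
    · exact h0le1.trans (hout θ hθ).le
  have hloc : IsLocalMin E θ₀ := Filter.Eventually.of_forall hglob
  rcases honly θ₀ hloc with h | h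
  · intro θ; rw [← h]; exact hglob θ
  · intro θ
    calc E θ₁ ≤ E θ₂ := hle
      _ = E θ₀ := by rw [h]
      _ ≤ E θ := hglob θ

/-- Key direction: strictly larger RE constant implies global minimality. -/
lemma keyDir (y₁ y₂ θ₁ θ₂ : ℝ) (hne : θ₁ ≠ θ₂)
    (hmin₁ : IsLocalMin (quarticE y₁ y₂) θ₁)
    (hmin₂ : IsLocalMin (quarticE y₁ y₂) θ₂)
    (honly : ∀ θ : ℝ, IsLocalMin (quarticE y₁ y₂) θ → θ = θ₁ ∨ θ = θ₂)
    (hgt : reConst y₁ y₂ θ₂ < reConst y₁ y₂ θ₁) :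
    ∀ θ : ℝ, quarticE y₁ y₂ θ₁ ≤ quarticE y₁ y₂ θ := by
  have hg₁ := firstOrder hmin₁
  have hg₂ := firstOrder hmin₂
  have hd : (θ₂ - θ₁) ≠ 0 := sub_ne_zero.mpr (Ne.symm hne)
  have hd2 : (0:ℝ) < (θ₂ - θ₁)^2 := by positivity
  have hA := expandE hg₁ θ₂
  have hB := expandE hg₂ θ₁
  -- r₁ + r₂ = (θ₁+θ₂)² + 1
  have hs : (θ₂ - θ₁)^2 * ((θ₁ + θ₂)^2 + 1 - (y₁ - θ₁^2) - (y₁ - θ₂^2)) = 0 := by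
    linear_combination -hA - hB
  have hs' : (θ₁ + θ₂)^2 + 1 = (y₁ - θ₁^2) + (y₁ - θ₂^2) := by
    rcases mul_eq_zero.mp hs with h | h
    · exact absurd h (by positivity)
    · linarith
  -- E θ₂ - E θ₁ = ½ d² (r₂ - r₁)
  have hdiff : quarticE y₁ y₂ θ₂ - quarticE y₁ y₂ θ₁
      = (1/2) * (θ₂ - θ₁)^2 * ((y₁ - θ₂^2) - (y₁ - θ₁^2)) := by
    linear_combination hA + (1/2)*(θ₂-θ₁)^2 * hs'
  -- now case on signs
  rcases le_or_gt (y₁ - θ₂^2) 0 with hr₂ | hr₂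
  · exact absurd hgt (by rw [reConst_top hmin₂ hr₂]; exact not_top_lt)
  rcases le_or_gt (y₁ - θ₁^2) 0 with hr₁ | hr₁
  · -- r₁ ≤ 0 < r₂ : E θ₁ < E θ₂
    apply globalMin honly
    nlinarith [hd2]
  · -- both positive: compare formulas
    rw [reConst_eq hmin₁ hr₁, reConst_eq hmin₂ hr₂] at hgt
    have hmin₂0 : IsLocalMin (quarticEexp y₁ y₂ θ₂ 0) θ₂ := by rw [exp_zero]; exact hmin₂
    have hcle₂ : 2*(y₁ - θ₂^2) ≤ 4*θ₂^2 + 1 := by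
      rcases necCond hg₂ hmin₂0 with h | ⟨h, _⟩ <;> nlinarith
    have hA₂0 : 0 ≤ (4*θ₂^2 + 1 - 2*(y₁ - θ₂^2)) / (2*(y₁ - θ₂^2)) :=
      div_nonneg (by linarith) (by linarith)
    rw [ENNReal.ofReal_lt_ofReal_iff_of_nonneg hA₂0] at hgt
    rw [div_lt_div_iff₀ (by linarith) (by linarith)] at hgt
    -- hgt : (c₂ - 2r₂) * (2r₁) < (c₁ - 2r₁) * (2r₂)  ⇒ r₁ < r₂
    have hy₁ : (0:ℝ) < 4*y₁ + 1 := by linarith [sq_nonneg θ₁, hr₁]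
    have hkey : 0 < ((y₁ - θ₂^2) - (y₁ - θ₁^2)) * (4*y₁ + 1) := by linarith [hgt]
    have hrlt : (y₁ - θ₁^2) < (y₁ - θ₂^2) := by
      by_contra hcon
      push_neg at hcon
      nlinarith [hkey, hy₁]
    apply globalMin honly
    nlinarith [hd2]

theorem stmt_0 (y₁ y₂ θ₁ θ₂ : ℝ) (hne : θ₁ ≠ θ₂)
    (hmin₁ : IsLocalMin (quarticE y₁ y₂) θ₁)
    (hmin₂ : IsLocalMin (quarticE y₁ y₂) θ₂)
    (honly : ∀ θ : ℝ, IsLocalMin (quarticE y₁ y₂) θ → θ = θ₁ ∨ θ = θ₂) :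
    (reConst y₁ y₂ θ₁ > reConst y₁ y₂ θ₂ →
      ∀ θ : ℝ, quarticE y₁ y₂ θ₁ ≤ quarticE y₁ y₂ θ) ∧
    (reConst y₁ y₂ θ₂ > reConst y₁ y₂ θ₁ →
      ∀ θ : ℝ, quarticE y₁ y₂ θ₂ ≤ quarticE y₁ y₂ θ) := by
  constructor
  · intro hgt θ
    exact keyDir y₁ y₂ θ₁ θ₂ hne hmin₁ hmin₂ honly hgt θ
  · intro hgt θ
    exact keyDir y₁ y₂ θ₂ θ₁ hne.symm hmin₂ hmin₁ (fun θ h => (honly θ h).symm) hgt θ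
end

section
/- Let y₁, y₂ ∈ ℝ and let θ* be a critical point of the quartic objective E (i.e. E'(θ*) = 0), and let α ≥ 0. If 2α(y₁ − θ*²) < E''(θ*), then θ* is a strict local minimum point of the α-expanded objective E_α; and if 2α(y₁ − θ*²) > E''(θ*), then θ* is not a local minimum point of E_α. -/
open Filter Topology

lemma quarticE_hasDerivAt (y₁ y₂ θ : ℝ) :
    HasDerivAt (quarticE y₁ y₂) (2 * θ ^ 3 - 2 * y₁ * θ + θ - y₂) θ := by
  have h1 : HasDerivAt (fun θ : ℝ => θ ^ 2) (2 * θ) θ := by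
    simpa using hasDerivAt_pow 2 θ
  have h2 : HasDerivAt (fun θ : ℝ => y₁ - θ ^ 2) (-(2 * θ)) θ := h1.const_sub y₁
  have h3 : HasDerivAt (fun θ : ℝ => (y₁ - θ ^ 2) ^ 2)
      ((2 : ℕ) * (y₁ - θ ^ 2) ^ 1 * (-(2 * θ))) θ := h2.pow 2
  have h4 : HasDerivAt (fun θ : ℝ => y₂ - θ) (-1) θ := by
    simpa using (hasDerivAt_id θ).const_sub y₂
  have h5 : HasDerivAt (fun θ : ℝ => (y₂ - θ) ^ 2)
      ((2 : ℕ) * (y₂ - θ) ^ 1 * (-1)) θ := h4.pow 2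
  have h6 := (h3.add h5).const_mul (1 / 2 : ℝ)
  refine h6.congr_deriv ?_
  push_cast
  ring

lemma eventually_abs_lt (θs c : ℝ) (hc : 0 < c) :
    ∀ᶠ θ in 𝓝 θs, |4 * θs * (θ - θs) + (θ - θs) ^ 2| < c := by
  have hpos : (0 : ℝ) < 4 * |θs| + 1 := by positivity
  have hε : (0 : ℝ) < min 1 (c / (4 * |θs| + 1)) := by
    refine lt_min one_pos (div_pos hc hpos)
  filter_upwards [Metric.ball_mem_nhds θs hε] with θ hθ
  rw [Metric.mem_ball, Real.dist_eq] at hθ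
  set d := θ - θs with hd
  have hd1 : |d| < 1 := lt_of_lt_of_le hθ (min_le_left _ _)
  have hd2 : |d| < c / (4 * |θs| + 1) := lt_of_lt_of_le hθ (min_le_right _ _)
  have hdc : |d| * (4 * |θs| + 1) < c := (lt_div_iff₀ hpos).mp hd2
  have habs : |4 * θs * d + d ^ 2| ≤ 4 * |θs| * |d| + |d| ^ 2 := by
    calc |4 * θs * d + d ^ 2| ≤ |4 * θs * d| + |d ^ 2| := abs_add_le _ _
    _ = 4 * |θs| * |d| + |d| ^ 2 := by
        rw [abs_mul, abs_mul, abs_pow]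
        simp [abs_of_nonneg, abs_abs]
  have h5 : |d| ^ 2 ≤ |d| := by nlinarith [abs_nonneg d]
  nlinarith [abs_nonneg d, abs_nonneg θs]

theorem stmt_6 (y₁ y₂ θs α : ℝ) (hα : 0 ≤ α)
    (hcrit : deriv (quarticE y₁ y₂) θs = 0) :
    (2 * α * (y₁ - θs ^ 2) < iteratedDeriv 2 (quarticE y₁ y₂) θs →
      ∀ᶠ θ in 𝓝[≠] θs, quarticEexp y₁ y₂ θs α θs < quarticEexp y₁ y₂ θs α θ) ∧
    (2 * α * (y₁ - θs ^ 2) > iteratedDeriv 2 (quarticE y₁ y₂) θs →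
      ¬ IsLocalMin (quarticEexp y₁ y₂ θs α) θs) := by
  have hfd : deriv (quarticE y₁ y₂) = fun θ => 2 * θ ^ 3 - 2 * y₁ * θ + θ - y₂ :=
    funext fun θ => (quarticE_hasDerivAt y₁ y₂ θ).deriv
  have hc : 2 * θs * (y₁ - θs ^ 2) + (y₂ - θs) = 0 := by
    have h0 : 2 * θs ^ 3 - 2 * y₁ * θs + θs - y₂ = 0 := by
      simpa [hfd] using hcrit
    linear_combination -h0
  have hd2 : HasDerivAt (fun θ : ℝ => 2 * θ ^ 3 - 2 * y₁ * θ + θ - y₂)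
      (6 * θs ^ 2 - 2 * y₁ + 1) θs := by
    have h := ((((hasDerivAt_pow 3 θs).const_mul (2 : ℝ)).sub
      ((hasDerivAt_id θs).const_mul (2 * y₁))).add (hasDerivAt_id θs)).sub_const y₂
    refine h.congr_deriv ?_
    push_cast; ring
  have hE2 : iteratedDeriv 2 (quarticE y₁ y₂) θs = 6 * θs ^ 2 - 2 * y₁ + 1 := by
    rw [iteratedDeriv_succ, iteratedDeriv_one, hfd]
    exact hd2.deriv
  have key : ∀ θ : ℝ, quarticEexp y₁ y₂ θs α θ - quarticEexp y₁ y₂ θs α θs =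
      (1 / 2) * (θ - θs) ^ 2 *
        ((6 * θs ^ 2 + 1 - 2 * y₁ - 2 * α * (y₁ - θs ^ 2)) + 4 * θs * (θ - θs) + (θ - θs) ^ 2) := by
    intro θ
    unfold quarticEexp
    linear_combination (-(θ - θs) * (1 + α)) * hc
  constructor
  · intro h
    rw [hE2] at h
    set c : ℝ := 6 * θs ^ 2 + 1 - 2 * y₁ - 2 * α * (y₁ - θs ^ 2) with hcdef
    have hcpos : 0 < c := by rw [hcdef]; linarith
    have hev := eventually_abs_lt θs c hcpos
    filter_upwards [mem_nhdsWithin_of_mem_nhds hev, self_mem_nhdsWithin] with θ h1 h2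
    have hne : θ ≠ θs := h2
    have hdne : θ - θs ≠ 0 := sub_ne_zero.mpr hne
    have hsq : 0 < (θ - θs) ^ 2 := by positivity
    have hpos : 0 < c + 4 * θs * (θ - θs) + (θ - θs) ^ 2 := by
      have := neg_abs_le (4 * θs * (θ - θs) + (θ - θs) ^ 2)
      linarith [h1]
    have := key θ
    nlinarith [this]
  · intro h hmin
    rw [hE2] at h
    set c : ℝ := 6 * θs ^ 2 + 1 - 2 * y₁ - 2 * α * (y₁ - θs ^ 2) with hcdef
    have hcneg : c < 0 := by rw [hcdef]; linarith
    have hev := eventually_abs_lt θs (-c) (by linarith)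
    have hlt : ∀ᶠ θ in 𝓝[≠] θs,
        quarticEexp y₁ y₂ θs α θ < quarticEexp y₁ y₂ θs α θs := by
      filter_upwards [mem_nhdsWithin_of_mem_nhds hev, self_mem_nhdsWithin] with θ h1 h2
      have hne : θ ≠ θs := h2
      have hdne : θ - θs ≠ 0 := sub_ne_zero.mpr hne
      have hsq : 0 < (θ - θs) ^ 2 := by positivity
      have hneg : c + 4 * θs * (θ - θs) + (θ - θs) ^ 2 < 0 := by
        have := le_abs_self (4 * θs * (θ - θs) + (θ - θs) ^ 2)
        linarith [h1]
      have := key θ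
      nlinarith [this]
    have hge : ∀ᶠ θ in 𝓝[≠] θs,
        quarticEexp y₁ y₂ θs α θs ≤ quarticEexp y₁ y₂ θs α θ :=
      (hmin.filter_mono nhdsWithin_le_nhds)
    obtain ⟨θ, hθ1, hθ2⟩ := (hlt.and hge).exists
    linarith
end

section
/- Let y₁, y₂ ∈ ℝ and let θ* be a critical point of the quartic objective E with E''(θ*) > 0 and y₁ > θ*². Then the RE constant of θ*, i.e. sup{α ≥ 0 : θ* is a local minimum point of E_α}, equals E''(θ*) / (2(y₁ − θ*²)) = (6θ*² + 1 − 2y₁) / (2(y₁ − θ*²)); in particular it is finite. -/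
open scoped ENNReal

lemma hasDerivAt_quarticE (y₁ y₂ x : ℝ) :
    HasDerivAt (quarticE y₁ y₂) (2 * x ^ 3 + (1 - 2 * y₁) * x - y₂) x := by
  have h1 : HasDerivAt (fun x : ℝ => y₁ - x ^ 2) (0 - ((2 : ℕ) : ℝ) * x ^ (2 - 1)) x :=
    (hasDerivAt_const x y₁).sub (hasDerivAt_pow 2 x)
  have h2 : HasDerivAt (fun x : ℝ => y₂ - x) (0 - 1) x :=
    (hasDerivAt_const x y₂).sub (hasDerivAt_id x)
  have h := ((h1.pow 2).add (h2.pow 2)).const_mul (1 / 2 : ℝ)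
  unfold quarticE
  refine h.congr_deriv ?_
  push_cast
  ring

lemma deriv_quarticE (y₁ y₂ : ℝ) :
    deriv (quarticE y₁ y₂) = fun x => 2 * x ^ 3 + (1 - 2 * y₁) * x - y₂ :=
  funext fun x => (hasDerivAt_quarticE y₁ y₂ x).deriv

lemma iteratedDeriv_two_quarticE (y₁ y₂ x : ℝ) :
    iteratedDeriv 2 (quarticE y₁ y₂) x = 6 * x ^ 2 + (1 - 2 * y₁) := by
  have h2 : (2 : ℕ) = 1 + 1 := rfl
  rw [h2, iteratedDeriv_succ, iteratedDeriv_one, deriv_quarticE]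
  have h1 : HasDerivAt (fun x : ℝ => 2 * x ^ 3 + (1 - 2 * y₁) * x - y₂)
      (6 * x ^ 2 + (1 - 2 * y₁)) x := by
    have h : HasDerivAt (fun x : ℝ => 2 * x ^ 3 + (1 - 2 * y₁) * x - y₂)
        (2 * (((3 : ℕ) : ℝ) * x ^ (3 - 1)) + (1 - 2 * y₁) * 1 - 0) x :=
      (((hasDerivAt_pow 3 x).const_mul 2).add ((hasDerivAt_id x).const_mul (1 - 2 * y₁))).sub
        (hasDerivAt_const x y₂)
    convert h using 1
    push_cast; ring
  exact h1.deriv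

lemma key_identity (y₁ θs α θ : ℝ) :
    quarticEexp y₁ (2 * θs ^ 3 + (1 - 2 * y₁) * θs) θs α θ
      - quarticEexp y₁ (2 * θs ^ 3 + (1 - 2 * y₁) * θs) θs α θs
    = (θ - θs) ^ 2 * ((6 * θs ^ 2 + 1 - 2 * y₁ - α * (2 * (y₁ - θs ^ 2))) / 2
        + 2 * θs * (θ - θs) + (θ - θs) ^ 2 / 2) := by
  unfold quarticEexp; ring

lemma cont_g (y₁ θs α : ℝ) : Continuous (fun θ : ℝ =>
    (6 * θs ^ 2 + 1 - 2 * y₁ - α * (2 * (y₁ - θs ^ 2))) / 2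
      + 2 * θs * (θ - θs) + (θ - θs) ^ 2 / 2) := by fun_prop

lemma localMin_of_pos (y₁ θs α : ℝ)
    (h : 0 < 6 * θs ^ 2 + 1 - 2 * y₁ - α * (2 * (y₁ - θs ^ 2))) :
    IsLocalMin (quarticEexp y₁ (2 * θs ^ 3 + (1 - 2 * y₁) * θs) θs α) θs := by
  set g : ℝ → ℝ := fun θ =>
    (6 * θs ^ 2 + 1 - 2 * y₁ - α * (2 * (y₁ - θs ^ 2))) / 2
      + 2 * θs * (θ - θs) + (θ - θs) ^ 2 / 2 with hg
  have hg0 : 0 < g θs := by simp [hg]; linarith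
  have hev : ∀ᶠ θ in nhds θs, 0 < g θ :=
    ((cont_g y₁ θs α).continuousAt).eventually (eventually_gt_nhds hg0)
  filter_upwards [hev] with θ hθ
  simp only [hg] at hθ
  have := key_identity y₁ θs α θ
  nlinarith [mul_nonneg (sq_nonneg (θ - θs)) hθ.le]

lemma not_localMin_of_neg (y₁ θs α : ℝ)
    (h : 6 * θs ^ 2 + 1 - 2 * y₁ - α * (2 * (y₁ - θs ^ 2)) < 0) :
    ¬ IsLocalMin (quarticEexp y₁ (2 * θs ^ 3 + (1 - 2 * y₁) * θs) θs α) θs := by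
  intro hmin
  set g : ℝ → ℝ := fun θ =>
    (6 * θs ^ 2 + 1 - 2 * y₁ - α * (2 * (y₁ - θs ^ 2))) / 2
      + 2 * θs * (θ - θs) + (θ - θs) ^ 2 / 2 with hg
  have hg0 : g θs < 0 := by simp [hg]; linarith
  have hev : ∀ᶠ θ in nhds θs, g θ < 0 :=
    ((cont_g y₁ θs α).continuousAt).eventually (eventually_lt_nhds hg0)
  have hcomb := (hev.and hmin).filter_mono (nhdsWithin_le_nhds (s := {θs}ᶜ))
  obtain ⟨θ, ⟨hgθ, hfθ⟩, hne⟩ := (hcomb.and self_mem_nhdsWithin).exists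
  have hkey := key_identity y₁ θs α θ
  have ht : θ - θs ≠ 0 := sub_ne_zero.mpr hne
  have ht2 : 0 < (θ - θs) ^ 2 := by positivity
  simp only [hg] at hgθ
  nlinarith [mul_neg_of_pos_of_neg ht2 hgθ]

theorem stmt_8 (y₁ y₂ θs : ℝ)
    (hcrit : deriv (quarticE y₁ y₂) θs = 0)
    (hpos : 0 < iteratedDeriv 2 (quarticE y₁ y₂) θs)
    (hy₁ : θs ^ 2 < y₁) :
    reConst y₁ y₂ θs
      = ENNReal.ofReal (iteratedDeriv 2 (quarticE y₁ y₂) θs / (2 * (y₁ - θs ^ 2))) ∧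
    reConst y₁ y₂ θs
      = ENNReal.ofReal ((6 * θs ^ 2 + 1 - 2 * y₁) / (2 * (y₁ - θs ^ 2))) ∧
    reConst y₁ y₂ θs ≠ ⊤ := by
  rw [iteratedDeriv_two_quarticE] at hpos ⊢
  rw [deriv_quarticE] at hcrit
  have hy2 : y₂ = 2 * θs ^ 3 + (1 - 2 * y₁) * θs := by
    simp only at hcrit; linarith
  subst hy2
  set c : ℝ := 6 * θs ^ 2 + 1 - 2 * y₁ with hc
  set d : ℝ := 2 * (y₁ - θs ^ 2) with hd
  have hcpos : 0 < c := by rw [hc]; linarith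
  have hdpos : 0 < d := by rw [hd]; linarith
  have hcd : 0 < c / d := div_pos hcpos hdpos
  have hmain : reConst y₁ (2 * θs ^ 3 + (1 - 2 * y₁) * θs) θs
      = ENNReal.ofReal (c / d) := by
    unfold reConst
    apply le_antisymm
    · apply sSup_le
      rintro x ⟨α, ⟨hα0, hmin⟩, rfl⟩
      apply ENNReal.ofReal_le_ofReal
      by_contra hgt
      push_neg at hgt
      have : c - α * d < 0 := by
        have : c < α * d := by
          rw [div_lt_iff₀ hdpos] at hgt; linarith
        linarith
      exact not_localMin_of_neg y₁ θs α (by rw [hc, hd] at this; linarith) hmin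
    · by_contra hlt
      push_neg at hlt
      set b := sSup (ENNReal.ofReal ''
        {α : ℝ | 0 ≤ α ∧ IsLocalMin (quarticEexp y₁ (2 * θs ^ 3 + (1 - 2 * y₁) * θs) θs α) θs})
        with hb
      have hbtop : b ≠ ⊤ := (hlt.trans_le le_top).ne
      have hbr : b.toReal < c / d := by
        have := ENNReal.toReal_lt_toReal hbtop ENNReal.ofReal_ne_top |>.mpr hlt
        rwa [ENNReal.toReal_ofReal hcd.le] at this
      set αm : ℝ := (b.toReal + c / d) / 2 with hαm
      have hαm0 : 0 ≤ αm := by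
        have := ENNReal.toReal_nonneg (a := b); rw [hαm]; linarith
      have hαmlt : αm < c / d := by rw [hαm]; linarith
      have hαmgt : b.toReal < αm := by
        have := ENNReal.toReal_nonneg (a := b); rw [hαm]; linarith
      have hpos' : 0 < c - αm * d := by
        have : αm * d < c := (lt_div_iff₀ hdpos).mp hαmlt
        linarith
      have hmem : ENNReal.ofReal αm ∈ ENNReal.ofReal ''
          {α : ℝ | 0 ≤ α ∧
            IsLocalMin (quarticEexp y₁ (2 * θs ^ 3 + (1 - 2 * y₁) * θs) θs α) θs} :=
        ⟨αm, ⟨hαm0, localMin_of_pos y₁ θs αm (by rw [hc, hd] at hpos'; linarith)⟩, rfl⟩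
      have hle : ENNReal.ofReal αm ≤ b := le_sSup hmem
      have : αm ≤ b.toReal := by
        have := ENNReal.toReal_le_toReal ENNReal.ofReal_ne_top hbtop |>.mpr hle
        rwa [ENNReal.toReal_ofReal hαm0] at this
      linarith
  refine ⟨?_, ?_, ?_⟩
  · rw [hmain]; congr 1; rw [hc, hd]; ring
  · rw [hmain]
  · rw [hmain]; exact ENNReal.ofReal_ne_top
end
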